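/- Let P₁, P₂ be finite point sets in ℝ² of odd sizes 2a+1 and 2b+1 respectively, with P₁ ∪ P₂ in general position and with the convex hulls of P₁ and P₂ disjoint. Then there exist points p₁ ∈ P₁ and p₂ ∈ P₂ such that the line through p₁ and p₂ has exactly a points of P₁ and exactly b points of P₂ on each of its two open sides. -/

import Mathlib

open Finset

attribute [local instance] Classical.propDecidable

/-- Points with vanishing cross product are collinear. -/
lemma collinear_of_cross (p q r : ℝ × ℝ)
    (h : (q.1 - p.1) * (r.2 - p.2) - (q.2 - p.2) * (r.1 - p.1) = 0) :
    Collinear ℝ ({p, q, r} : Set (ℝ × ℝ)) := by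
  rcases eq_or_ne q p with hqp | hqp
  · subst hqp
    have : ({q, q, r} : Set (ℝ × ℝ)) = {q, r} := by
      simp [Set.insert_comm, Set.pair_comm]
    rw [this]
    exact collinear_pair ℝ q r
  · rw [collinear_iff_of_mem (Set.mem_insert p _)]
    refine ⟨q - p, ?_⟩
    intro z hz
    rcases hz with rfl | rfl | rfl
    · exact ⟨0, by simp⟩
    · exact ⟨1, by simp⟩
    · rcases eq_or_ne q.1 p.1 with h1 | h1
      · have h2 : q.2 - p.2 ≠ 0 := by
          intro h2
          apply hqp
          have := sub_eq_zero.mp h2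
          exact Prod.ext (sub_eq_zero.mp (by rw[h1]; ring)) this
        have hr1 : z.1 = p.1 := by
          have : (q.2 - p.2) * (z.1 - p.1) = 0 := by rw [h1] at h; linarith
          rcases mul_eq_zero.mp this with h' | h'
          · exact absurd h' h2
          · linarith [sub_eq_zero.mp h']
        refine ⟨(z.2 - p.2) / (q.2 - p.2), ?_⟩
        have : ((z.2 - p.2) / (q.2 - p.2)) • (q - p) +ᵥ p =
            (((z.2 - p.2) / (q.2 - p.2)) * (q.1 - p.1) + p.1,
             ((z.2 - p.2) / (q.2 - p.2)) * (q.2 - p.2) + p.2) := rfl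
        rw [this]
        refine Prod.ext ?_ ?_
        · simp only
          rw [hr1, h1]; ring
        · simp only
          field_simp
          ring
      · refine ⟨(z.1 - p.1) / (q.1 - p.1), ?_⟩
        have hq1 : q.1 - p.1 ≠ 0 := sub_ne_zero.mpr h1
        have : ((z.1 - p.1) / (q.1 - p.1)) • (q - p) +ᵥ p =
            (((z.1 - p.1) / (q.1 - p.1)) * (q.1 - p.1) + p.1,
             ((z.1 - p.1) / (q.1 - p.1)) * (q.2 - p.2) + p.2) := rfl
        rw [this]
        refine Prod.ext ?_ ?_
        · simp only; field_simp; ring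
        · simp only
          have : (q.1 - p.1) * (z.2 - p.2) = (z.1 - p.1) * (q.2 - p.2) := by linarith
          field_simp
          linarith [this]

lemma continuous_finset_sup' {ι : Type*} (s : Finset ι) (hs : s.Nonempty) (F : ι → ℝ → ℝ)
    (hF : ∀ i ∈ s, Continuous (F i)) :
    Continuous fun x => s.sup' hs fun i => F i x := by
  induction hs using Finset.Nonempty.cons_induction with
  | singleton a => simpa using hF a (by simp)
  | cons a s ha hs ih =>
      have h1 : Continuous (F a) := hF a (by simp)
      have h2 : Continuous fun x => s.sup' hs fun i => F i x :=
        ih fun i hi => hF i (by simp [hi])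
      have he : (fun x => (Finset.cons a s ha).sup' (Finset.cons_nonempty ha) fun i => F i x)
          = fun x => max (F a x) (s.sup' hs fun i => F i x) :=
        funext fun x => Finset.sup'_cons hs _
      rw [he]
      exact h1.max h2
lemma continuous_finset_inf' {ι : Type*} (s : Finset ι) (hs : s.Nonempty) (F : ι → ℝ → ℝ)
    (hF : ∀ i ∈ s, Continuous (F i)) :
    Continuous fun x => s.inf' hs fun i => F i x := by
  induction hs using Finset.Nonempty.cons_induction with
  | singleton a => simpa using hF a (by simp)
  | cons a s ha hs ih =>
      have h1 : Continuous (F a) := hF a (by simp)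
      have h2 : Continuous fun x => s.inf' hs fun i => F i x :=
        ih fun i hi => hF i (by simp [hi])
      have he : (fun x => (Finset.cons a s ha).inf' (Finset.cons_nonempty ha) fun i => F i x)
          = fun x => min (F a x) (s.inf' hs fun i => F i x) :=
        funext fun x => Finset.inf'_cons hs _
      rw [he]
      exact h1.min h2

/-- sup of the linear values over a finset, with junk value for empty. -/
noncomputable def GG (m : ℝ) (T : Finset (ℝ × ℝ)) : ℝ :=
  if hT : T.Nonempty then T.sup' hT (fun p => p.1 * m - p.2) else 0

lemma GG_eq {T : Finset (ℝ × ℝ)} (hT : T.Nonempty) (m : ℝ) :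
    GG m T = T.sup' hT (fun p => p.1 * m - p.2) := dif_pos hT

/-- the `n`-th smallest of the values `p.1 * m - p.2`, as min over n-subsets of max. -/
noncomputable def medf (C : Finset (ℝ × ℝ)) (n : ℕ) (m : ℝ) : ℝ :=
  if h : (C.powersetCard n).Nonempty then (C.powersetCard n).inf' h (GG m) else 0

lemma medf_eq {C : Finset (ℝ × ℝ)} {n : ℕ} (h : (C.powersetCard n).Nonempty) (m : ℝ) :
    medf C n m = (C.powersetCard n).inf' h (GG m) := dif_pos h

lemma nonempty_of_mem_powersetCard {C S : Finset (ℝ × ℝ)} {k : ℕ}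
    (hS : S ∈ C.powersetCard (k + 1)) : S.Nonempty := by
  rw [mem_powersetCard] at hS
  exact card_pos.mp (by omega)

lemma medf_attained (C : Finset (ℝ × ℝ)) (k : ℕ) (h : k + 1 ≤ C.card) (m : ℝ) :
    ∃ p ∈ C, p.1 * m - p.2 = medf C (k + 1) m := by
  have hne : (C.powersetCard (k + 1)).Nonempty := powersetCard_nonempty.2 h
  obtain ⟨S, hS, hSe⟩ := exists_mem_eq_inf' hne (GG m)
  have hSne : S.Nonempty := nonempty_of_mem_powersetCard hS
  obtain ⟨p, hp, hpe⟩ := exists_mem_eq_sup' hSne (fun p => p.1 * m - p.2)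
  refine ⟨p, (mem_powersetCard.mp hS).1 hp, ?_⟩
  rw [medf_eq hne, hSe, GG_eq hSne, hpe]


lemma medf_continuous (C : Finset (ℝ × ℝ)) (k : ℕ) (h : k + 1 ≤ C.card) :
    Continuous (medf C (k + 1)) := by
  have hne : (C.powersetCard (k + 1)).Nonempty := powersetCard_nonempty.2 h
  have he : medf C (k + 1) = fun m => (C.powersetCard (k + 1)).inf' hne (fun T => GG m T) :=
    funext fun m => medf_eq hne m
  rw [he]
  refine continuous_finset_inf' _ hne (fun T m => GG m T) ?_
  intro T hT
  have hTne : T.Nonempty := nonempty_of_mem_powersetCard hT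
  show Continuous fun m => GG m T
  have : (fun m => GG m T) = fun m => T.sup' hTne (fun p => p.1 * m - p.2) :=
    funext fun m => GG_eq hTne m
  rw [this]
  exact continuous_finset_sup' _ hTne _ (fun p _ => by fun_prop)

lemma medf_le_sup (C : Finset (ℝ × ℝ)) (k : ℕ) (h : k + 1 ≤ C.card) (hC : C.Nonempty) (m : ℝ) :
    medf C (k + 1) m ≤ C.sup' hC (fun p => p.1 * m - p.2) := by
  have hne : (C.powersetCard (k + 1)).Nonempty := powersetCard_nonempty.2 h
  obtain ⟨S, hSsub, hScard⟩ := exists_subset_card_eq (s := C) (n := k + 1) h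
  have hSm : S ∈ C.powersetCard (k + 1) := mem_powersetCard.2 ⟨hSsub, hScard⟩
  have hSne : S.Nonempty := nonempty_of_mem_powersetCard hSm
  calc medf C (k + 1) m ≤ GG m S := by rw [medf_eq hne]; exact inf'_le _ hSm
    _ = S.sup' hSne (fun p => p.1 * m - p.2) := GG_eq hSne m
    _ ≤ C.sup' hC (fun p => p.1 * m - p.2) :=
        Finset.sup'_le hSne _ (fun p hp => Finset.le_sup' (fun p => p.1 * m - p.2) (hSsub hp))

lemma inf_le_medf (C : Finset (ℝ × ℝ)) (k : ℕ) (h : k + 1 ≤ C.card) (hC : C.Nonempty) (m : ℝ) :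
    C.inf' hC (fun p => p.1 * m - p.2) ≤ medf C (k + 1) m := by
  have hne : (C.powersetCard (k + 1)).Nonempty := powersetCard_nonempty.2 h
  rw [medf_eq hne]
  refine Finset.le_inf' hne _ (fun S hS => ?_)
  have hSne : S.Nonempty := nonempty_of_mem_powersetCard hS
  obtain ⟨p, hp⟩ := id hSne
  rw [GG_eq hSne]
  calc C.inf' hC (fun p => p.1 * m - p.2) ≤ p.1 * m - p.2 :=
        Finset.inf'_le _ ((mem_powersetCard.mp hS).1 hp)
    _ ≤ S.sup' hSne (fun p => p.1 * m - p.2) := Finset.le_sup' (fun p => p.1 * m - p.2) hp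

lemma count_lt_le (C : Finset (ℝ × ℝ)) (k : ℕ) (hC : C.card = 2 * k + 1) (m : ℝ) :
    (C.filter fun p => p.1 * m - p.2 < medf C (k + 1) m).card ≤ k := by
  by_contra h'
  push_neg at h'
  have hne : (C.powersetCard (k + 1)).Nonempty := powersetCard_nonempty.2 (by omega)
  obtain ⟨S, hSsub, hScard⟩ := exists_subset_card_eq (n := k + 1) (by omega : k + 1 ≤
    (C.filter fun p => p.1 * m - p.2 < medf C (k + 1) m).card)
  have hSC : S ∈ C.powersetCard (k + 1) :=
    mem_powersetCard.2 ⟨hSsub.trans (filter_subset _ _), hScard⟩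
  have hSne : S.Nonempty := nonempty_of_mem_powersetCard hSC
  have h1 : medf C (k + 1) m ≤ GG m S := by rw [medf_eq hne]; exact inf'_le _ hSC
  have h2 : GG m S < medf C (k + 1) m := by
    rw [GG_eq hSne]
    refine (Finset.sup'_lt_iff hSne).2 (fun p hp => ?_)
    exact (mem_filter.mp (hSsub hp)).2
  linarith

lemma count_gt_le (C : Finset (ℝ × ℝ)) (k : ℕ) (hC : C.card = 2 * k + 1) (m : ℝ) :
    (C.filter fun p => medf C (k + 1) m < p.1 * m - p.2).card ≤ k := by
  set v := medf C (k + 1) m with hv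
  by_contra h'
  push_neg at h'
  have hne : (C.powersetCard (k + 1)).Nonempty := powersetCard_nonempty.2 (by omega)
  have hsplit : (C.filter fun p => p.1 * m - p.2 ≤ v).card
      + (C.filter fun p => ¬ (p.1 * m - p.2 ≤ v)).card = C.card :=
    card_filter_add_card_filter_not _
  have hcongr : (C.filter fun p => ¬ (p.1 * m - p.2 ≤ v))
      = (C.filter fun p => v < p.1 * m - p.2) :=
    filter_congr (fun p _ => by simp only [not_le])
  have hle : (C.filter fun p => p.1 * m - p.2 ≤ v).card ≤ k := by
    rw [hcongr] at hsplit; omega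
  obtain ⟨S, hS, hSe⟩ := exists_mem_eq_inf' hne (GG m)
  have hSne : S.Nonempty := nonempty_of_mem_powersetCard hS
  have hex : ∃ p ∈ S, ¬ (p.1 * m - p.2 ≤ v) := by
    by_contra hall
    push_neg at hall
    have : S ⊆ C.filter fun p => p.1 * m - p.2 ≤ v := fun p hp =>
      mem_filter.2 ⟨(mem_powersetCard.mp hS).1 hp, hall p hp⟩
    have := card_le_card this
    rw [(mem_powersetCard.mp hS).2] at this
    omega
  obtain ⟨p, hp, hpv⟩ := hex
  push_neg at hpv
  have : v = S.sup' hSne (fun p => p.1 * m - p.2) := by rw [hv, medf_eq hne, hSe, GG_eq hSne]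
  have h2 : p.1 * m - p.2 ≤ v := this ▸ Finset.le_sup' (fun p => p.1 * m - p.2) hp
  linarith


/-- exact counts around the median value, given that the median value is attained exactly once -/
lemma count_exact (C : Finset (ℝ × ℝ)) (k : ℕ) (hC : C.card = 2 * k + 1) (m v : ℝ)
    (hv : v = medf C (k + 1) m)
    (huniq : (C.filter fun p => p.1 * m - p.2 = v).card = 1) :
    (C.filter fun p => p.1 * m - p.2 < v).card = k ∧
    (C.filter fun p => v < p.1 * m - p.2).card = k := by
  have h1 : (C.filter fun p => p.1 * m - p.2 < v).card ≤ k := hv ▸ count_lt_le C k hC m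
  have h3 : (C.filter fun p => v < p.1 * m - p.2).card ≤ k := hv ▸ count_gt_le C k hC m
  have hs1 : (C.filter fun p => p.1 * m - p.2 < v).card
      + (C.filter fun p => ¬ (p.1 * m - p.2 < v)).card = C.card :=
    card_filter_add_card_filter_not _
  have hs2 : ((C.filter fun p => ¬ (p.1 * m - p.2 < v)).filter fun p => p.1 * m - p.2 = v).card
      + ((C.filter fun p => ¬ (p.1 * m - p.2 < v)).filter fun p => ¬ (p.1 * m - p.2 = v)).card
      = (C.filter fun p => ¬ (p.1 * m - p.2 < v)).card :=
    card_filter_add_card_filter_not _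
  rw [filter_filter, filter_filter] at hs2
  have e1 : (C.filter fun p => ¬ (p.1 * m - p.2 < v) ∧ p.1 * m - p.2 = v)
      = C.filter fun p => p.1 * m - p.2 = v :=
    filter_congr (fun p _ => by
      constructor
      · rintro ⟨-, h⟩; exact h
      · intro h; exact ⟨by rw [h]; exact lt_irrefl v, h⟩)
  have e2 : (C.filter fun p => ¬ (p.1 * m - p.2 < v) ∧ ¬ (p.1 * m - p.2 = v))
      = C.filter fun p => v < p.1 * m - p.2 :=
    filter_congr (fun p _ => by
      constructor
      · rintro ⟨h', h''⟩
        rcases lt_trichotomy (p.1 * m - p.2) v with h | h | h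
        · exact absurd h h'
        · exact absurd h h''
        · exact h
      · intro h; exact ⟨not_lt.2 (le_of_lt h), fun h' => absurd h' (ne_of_gt h)⟩)
  rw [e1, e2, huniq] at hs2
  omega


set_option maxHeartbeats 1000000 in
lemma core (a b : ℕ) (A B : Finset (ℝ × ℝ)) (hA : A.card = 2 * a + 1) (hB : B.card = 2 * b + 1)
    (hAx : ∀ p ∈ A, p.1 < 0) (hBx : ∀ q ∈ B, 0 < q.1)
    (hgp : ∀ p q r : ℝ × ℝ, p ∈ A ∪ B → q ∈ A ∪ B → r ∈ A ∪ B →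
      p ≠ q → p ≠ r → q ≠ r →
      (q.1 - p.1) * (r.2 - p.2) - (q.2 - p.2) * (r.1 - p.1) ≠ 0) :
    ∃ m k : ℝ, ∃ p₁ ∈ A, ∃ p₂ ∈ B,
      p₁.2 = m * p₁.1 + k ∧ p₂.2 = m * p₂.1 + k ∧
      (A.filter fun p => p.2 < m * p.1 + k).card = a ∧
      (A.filter fun p => m * p.1 + k < p.2).card = a ∧
      (B.filter fun p => p.2 < m * p.1 + k).card = b ∧
      (B.filter fun p => m * p.1 + k < p.2).card = b := by
  have hAne : A.Nonempty := card_pos.mp (by omega)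
  have hBne : B.Nonempty := card_pos.mp (by omega)
  have hAcard : a + 1 ≤ A.card := by omega
  have hBcard : b + 1 ≤ B.card := by omega
  have hABne : (A ×ˢ B).Nonempty := hAne.product hBne
  -- the pair thresholds
  set thr : ℝ × ℝ → ℝ × ℝ → ℝ := fun p q => (q.2 - p.2) / (q.1 - p.1) with hthr
  set x₀ : ℝ := (A ×ˢ B).inf' hABne (fun pq => thr pq.1 pq.2) - 1 with hx₀
  set x₁ : ℝ := (A ×ˢ B).sup' hABne (fun pq => thr pq.1 pq.2) + 1 with hx₁
  have hx01 : x₀ < x₁ := by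
    obtain ⟨pq, hpq⟩ := id hABne
    have h1 := Finset.inf'_le (fun pq => thr pq.1 pq.2) hpq
    have h2 := Finset.le_sup' (fun pq => thr pq.1 pq.2) hpq
    rw [hx₀, hx₁]; linarith
  have key : ∀ p ∈ A, ∀ q ∈ B, ∀ x : ℝ, x < thr p q → q.1 * x - q.2 < p.1 * x - p.2 := by
    intro p hp q hq x hx
    have hd : 0 < q.1 - p.1 := by have := hAx p hp; have := hBx q hq; linarith
    have : (q.1 - p.1) * x < q.2 - p.2 := by
      rw [hthr] at hx
      calc (q.1 - p.1) * x < (q.1 - p.1) * ((q.2 - p.2) / (q.1 - p.1)) := by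
            exact mul_lt_mul_of_pos_left hx hd
        _ = q.2 - p.2 := by field_simp
    linarith
  have key' : ∀ p ∈ A, ∀ q ∈ B, ∀ x : ℝ, thr p q < x → p.1 * x - p.2 < q.1 * x - q.2 := by
    intro p hp q hq x hx
    have hd : 0 < q.1 - p.1 := by have := hAx p hp; have := hBx q hq; linarith
    have : q.2 - p.2 < (q.1 - p.1) * x := by
      rw [hthr] at hx
      calc q.2 - p.2 = (q.1 - p.1) * ((q.2 - p.2) / (q.1 - p.1)) := by field_simp
        _ < (q.1 - p.1) * x := mul_lt_mul_of_pos_left hx hd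
    linarith
  -- at x₀ the B-median is below the A-median, at x₁ above
  have h0 : medf B (b + 1) x₀ < medf A (a + 1) x₀ := by
    have hBs : medf B (b + 1) x₀ ≤ B.sup' hBne (fun q => q.1 * x₀ - q.2) :=
      medf_le_sup B b hBcard hBne x₀
    have hAi : A.inf' hAne (fun p => p.1 * x₀ - p.2) ≤ medf A (a + 1) x₀ :=
      inf_le_medf A a hAcard hAne x₀
    have hlt : B.sup' hBne (fun q => q.1 * x₀ - q.2) < A.inf' hAne (fun p => p.1 * x₀ - p.2) := by
      refine (Finset.sup'_lt_iff hBne).2 (fun q hq => ?_)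
      refine (Finset.lt_inf'_iff hAne).2 (fun p hp => ?_)
      refine key p hp q hq x₀ ?_
      have : (A ×ˢ B).inf' hABne (fun pq => thr pq.1 pq.2) ≤ thr p q :=
        Finset.inf'_le (fun pq => thr pq.1 pq.2)
          (show (p, q) ∈ A ×ˢ B from mem_product.2 ⟨hp, hq⟩)
      rw [hx₀]; linarith
    linarith
  have h1 : medf A (a + 1) x₁ < medf B (b + 1) x₁ := by
    have hAs : medf A (a + 1) x₁ ≤ A.sup' hAne (fun p => p.1 * x₁ - p.2) :=
      medf_le_sup A a hAcard hAne x₁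
    have hBi : B.inf' hBne (fun q => q.1 * x₁ - q.2) ≤ medf B (b + 1) x₁ :=
      inf_le_medf B b hBcard hBne x₁
    have hlt : A.sup' hAne (fun p => p.1 * x₁ - p.2) < B.inf' hBne (fun q => q.1 * x₁ - q.2) := by
      refine (Finset.sup'_lt_iff hAne).2 (fun p hp => ?_)
      refine (Finset.lt_inf'_iff hBne).2 (fun q hq => ?_)
      refine key' p hp q hq x₁ ?_
      have : thr p q ≤ (A ×ˢ B).sup' hABne (fun pq => thr pq.1 pq.2) :=
        Finset.le_sup' (fun pq => thr pq.1 pq.2)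
          (show (p, q) ∈ A ×ˢ B from mem_product.2 ⟨hp, hq⟩)
      rw [hx₁]; linarith
    linarith
  -- IVT
  have hcont : ContinuousOn (fun x => medf A (a + 1) x - medf B (b + 1) x) (Set.Icc x₀ x₁) :=
    ((medf_continuous A a hAcard).sub (medf_continuous B b hBcard)).continuousOn
  have hIVT := intermediate_value_Icc' (le_of_lt hx01) hcont
  have h0mem : (0 : ℝ) ∈ Set.Icc (medf A (a+1) x₁ - medf B (b+1) x₁)
      (medf A (a+1) x₀ - medf B (b+1) x₀) := Set.mem_Icc.2 ⟨by linarith, by linarith⟩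
  obtain ⟨m, hmmem, hm0⟩ := hIVT h0mem
  set v : ℝ := medf A (a + 1) m with hv
  have hvB : medf B (b + 1) m = v := by
    simp only at hm0
    rw [hv]; linarith
  -- attainment
  obtain ⟨p₁, hp₁A, hp₁v⟩ := medf_attained A a hAcard m
  obtain ⟨p₂, hp₂B, hp₂v⟩ := medf_attained B b hBcard m
  rw [← hv] at hp₁v
  rw [hvB] at hp₂v
  -- uniqueness of attainment in A
  have hABdisj : ∀ p ∈ A, ∀ q ∈ B, p ≠ q := by
    intro p hp q hq h
    have h1 := hAx p hp
    have h2 := hBx q hq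
    subst h; linarith
  have huniqA : (A.filter fun p => p.1 * m - p.2 = v).card = 1 := by
    have hmem : p₁ ∈ A.filter fun p => p.1 * m - p.2 = v := mem_filter.2 ⟨hp₁A, hp₁v⟩
    refine le_antisymm (Finset.card_le_one.2 ?_) (card_pos.mpr ⟨p₁, hmem⟩)
    · intro p hp p' hp'
      by_contra hne
      obtain ⟨hpA, hpv⟩ := mem_filter.mp hp
      obtain ⟨hp'A, hp'v⟩ := mem_filter.mp hp'
      refine hgp p p' p₂ (mem_union_left _ hpA) (mem_union_left _ hp'A)
        (mem_union_right _ hp₂B) hne (hABdisj p hpA p₂ hp₂B) (hABdisj p' hp'A p₂ hp₂B) ?_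
      have e1 : p.2 = m * p.1 - v := by linarith
      have e2 : p'.2 = m * p'.1 - v := by linarith
      have e3 : p₂.2 = m * p₂.1 - v := by linarith
      rw [e1, e2, e3]; ring
  have huniqB : (B.filter fun q => q.1 * m - q.2 = v).card = 1 := by
    have hmem : p₂ ∈ B.filter fun q => q.1 * m - q.2 = v := mem_filter.2 ⟨hp₂B, hp₂v⟩
    refine le_antisymm (Finset.card_le_one.2 ?_) (card_pos.mpr ⟨p₂, hmem⟩)
    · intro q hq q' hq'
      by_contra hne
      obtain ⟨hqB, hqv⟩ := mem_filter.mp hq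
      obtain ⟨hq'B, hq'v⟩ := mem_filter.mp hq'
      refine hgp q q' p₁ (mem_union_right _ hqB) (mem_union_right _ hq'B)
        (mem_union_left _ hp₁A) hne (fun h => hABdisj p₁ hp₁A q hqB h.symm)
        (fun h => hABdisj p₁ hp₁A q' hq'B h.symm) ?_
      have e1 : q.2 = m * q.1 - v := by linarith
      have e2 : q'.2 = m * q'.1 - v := by linarith
      have e3 : p₁.2 = m * p₁.1 - v := by linarith
      rw [e1, e2, e3]; ring
  obtain ⟨hcA1, hcA2⟩ := count_exact A a hA m v hv huniqA
  obtain ⟨hcB1, hcB2⟩ := count_exact B b hB m v hvB.symm huniqB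
  refine ⟨m, -v, p₁, hp₁A, p₂, hp₂B, by linarith, by linarith, ?_, ?_, ?_, ?_⟩
  · rw [show (A.filter fun p => p.2 < m * p.1 + -v)
        = A.filter fun p => v < p.1 * m - p.2 from
      filter_congr (fun p _ => by constructor <;> intro h <;> linarith)]
    exact hcA2
  · rw [show (A.filter fun p => m * p.1 + -v < p.2)
        = A.filter fun p => p.1 * m - p.2 < v from
      filter_congr (fun p _ => by constructor <;> intro h <;> linarith)]
    exact hcA1
  · rw [show (B.filter fun p => p.2 < m * p.1 + -v)
        = B.filter fun p => v < p.1 * m - p.2 from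
      filter_congr (fun p _ => by constructor <;> intro h <;> linarith)]
    exact hcB2
  · rw [show (B.filter fun p => m * p.1 + -v < p.2)
        = B.filter fun p => p.1 * m - p.2 < v from
      filter_congr (fun p _ => by constructor <;> intro h <;> linarith)]
    exact hcB1

set_option maxHeartbeats 2000000 in
/-- For separated point sets `P₁, P₂` of sizes `2a+1` and `2b+1` with the union in
general position, there are points `p₁ ∈ P₁`, `p₂ ∈ P₂` such that the line through them
has exactly `a` points of `P₁` and exactly `b` points of `P₂` on each open side. -/
theorem separated_ham_sandwich_exact (P₁ P₂ : Finset (ℝ × ℝ)) (a b : ℕ)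
    (h₁ : P₁.card = 2 * a + 1) (h₂ : P₂.card = 2 * b + 1)
    (hgp : ∀ p q r : ℝ × ℝ, p ∈ P₁ ∪ P₂ → q ∈ P₁ ∪ P₂ → r ∈ P₁ ∪ P₂ →
      p ≠ q → p ≠ r → q ≠ r → ¬ Collinear ℝ ({p, q, r} : Set (ℝ × ℝ)))
    (hsep : Disjoint (convexHull ℝ (P₁ : Set (ℝ × ℝ))) (convexHull ℝ (P₂ : Set (ℝ × ℝ)))) :
    ∃ p₁ ∈ P₁, ∃ p₂ ∈ P₂, ∃ α β γ : ℝ, (α, β) ≠ (0, 0) ∧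
      α * p₁.1 + β * p₁.2 + γ = 0 ∧ α * p₂.1 + β * p₂.2 + γ = 0 ∧
      {q ∈ (P₁ : Set (ℝ × ℝ)) | 0 < α * q.1 + β * q.2 + γ}.ncard = a ∧
      {q ∈ (P₁ : Set (ℝ × ℝ)) | α * q.1 + β * q.2 + γ < 0}.ncard = a ∧
      {q ∈ (P₂ : Set (ℝ × ℝ)) | 0 < α * q.1 + β * q.2 + γ}.ncard = b ∧
      {q ∈ (P₂ : Set (ℝ × ℝ)) | α * q.1 + β * q.2 + γ < 0}.ncard = b := by
  classical
  -- separate by a continuous linear functional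
  obtain ⟨f, u, v, hfu, huv, hfv⟩ :=
    geometric_hahn_banach_compact_closed (convex_convexHull ℝ _)
      (P₁.finite_toSet.isCompact_convexHull (𝕜 := ℝ)) (convex_convexHull ℝ _)
      ((P₂.finite_toSet.isCompact_convexHull (𝕜 := ℝ)).isClosed) hsep
  have hP₁f : ∀ p ∈ P₁, f p < u := fun p hp =>
    hfu p (subset_convexHull ℝ _ hp)
  have hP₂f : ∀ q ∈ P₂, v < f q := fun q hq =>
    hfv q (subset_convexHull ℝ _ hq)
  set α₀ : ℝ := f (1, 0) with hα₀
  set β₀ : ℝ := f (0, 1) with hβ₀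
  have hf : ∀ z : ℝ × ℝ, f z = α₀ * z.1 + β₀ * z.2 := by
    intro z
    have hz : z = z.1 • ((1 : ℝ), (0 : ℝ)) + z.2 • ((0 : ℝ), (1 : ℝ)) := by
      refine Prod.ext ?_ ?_ <;> simp
    calc f z = f (z.1 • ((1 : ℝ), (0 : ℝ)) + z.2 • ((0 : ℝ), (1 : ℝ))) := by rw [← hz]
      _ = z.1 * f (1, 0) + z.2 * f (0, 1) := by
          rw [map_add, map_smul, map_smul, smul_eq_mul, smul_eq_mul]
      _ = α₀ * z.1 + β₀ * z.2 := by rw [hα₀, hβ₀]; ring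
  have hP₁ne : P₁.Nonempty := card_pos.mp (by omega)
  have hP₂ne : P₂.Nonempty := card_pos.mp (by omega)
  have hαβ₀ : ¬ (α₀ = 0 ∧ β₀ = 0) := by
    rintro ⟨h1, h2⟩
    obtain ⟨p, hp⟩ := hP₁ne
    obtain ⟨q, hq⟩ := hP₂ne
    have e1 : f p = 0 := by rw [hf p, h1, h2]; ring
    have e2 : f q = 0 := by rw [hf q, h1, h2]; ring
    have := hP₁f p hp
    have := hP₂f q hq
    linarith
  have hden : 0 < α₀ ^ 2 + β₀ ^ 2 := by
    rcases not_and_or.mp hαβ₀ with h | h <;> positivity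
  set c₀ : ℝ := (u + v) / 2 with hc₀
  set T : ℝ × ℝ → ℝ × ℝ :=
    fun z => (α₀ * z.1 + β₀ * z.2 - c₀, -β₀ * z.1 + α₀ * z.2) with hT
  have hTinj : Function.Injective T := by
    intro z w h
    rw [hT] at h
    simp only [Prod.mk.injEq] at h
    obtain ⟨e1, e2⟩ := h
    have d1 : α₀ * (z.1 - w.1) + β₀ * (z.2 - w.2) = 0 := by linarith
    have d2 : -β₀ * (z.1 - w.1) + α₀ * (z.2 - w.2) = 0 := by linarith
    have k1 : (α₀ ^ 2 + β₀ ^ 2) * (z.1 - w.1) = 0 := by linear_combination α₀ * d1 - β₀ * d2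
    have k2 : (α₀ ^ 2 + β₀ ^ 2) * (z.2 - w.2) = 0 := by linear_combination β₀ * d1 + α₀ * d2
    have z1 : z.1 = w.1 := by
      rcases mul_eq_zero.mp k1 with h | h
      · linarith
      · linarith
    have z2 : z.2 = w.2 := by
      rcases mul_eq_zero.mp k2 with h | h
      · linarith
      · linarith
    exact Prod.ext z1 z2
  set A : Finset (ℝ × ℝ) := P₁.image T with hA
  set B : Finset (ℝ × ℝ) := P₂.image T with hB
  have hAcard : A.card = 2 * a + 1 := by rw [hA, card_image_of_injective _ hTinj, h₁]
  have hBcard : B.card = 2 * b + 1 := by rw [hB, card_image_of_injective _ hTinj, h₂]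
  have hAx : ∀ p ∈ A, p.1 < 0 := by
    rintro p hp
    rw [hA] at hp
    obtain ⟨z, hz, rfl⟩ := mem_image.mp hp
    have := hP₁f z hz
    rw [hf z] at this
    show α₀ * z.1 + β₀ * z.2 - c₀ < 0
    rw [hc₀]; linarith
  have hBx : ∀ q ∈ B, 0 < q.1 := by
    rintro q hq
    rw [hB] at hq
    obtain ⟨z, hz, rfl⟩ := mem_image.mp hq
    have := hP₂f z hz
    rw [hf z] at this
    show 0 < α₀ * z.1 + β₀ * z.2 - c₀
    rw [hc₀]; linarith
  -- transported general position (cross product form)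
  have hcross : ∀ z w : ℝ × ℝ, ∀ r : ℝ × ℝ,
      ((T w).1 - (T z).1) * ((T r).2 - (T z).2) - ((T w).2 - (T z).2) * ((T r).1 - (T z).1)
      = (α₀ ^ 2 + β₀ ^ 2) * ((w.1 - z.1) * (r.2 - z.2) - (w.2 - z.2) * (r.1 - z.1)) := by
    intro z w r
    rw [hT]
    simp only
    ring
  have hgp' : ∀ p q r : ℝ × ℝ, p ∈ A ∪ B → q ∈ A ∪ B → r ∈ A ∪ B →
      p ≠ q → p ≠ r → q ≠ r →
      (q.1 - p.1) * (r.2 - p.2) - (q.2 - p.2) * (r.1 - p.1) ≠ 0 := by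
    intro p q r hp hq hr hpq hpr hqr hzero
    have hpre : ∀ s : ℝ × ℝ, s ∈ A ∪ B → ∃ z ∈ P₁ ∪ P₂, T z = s := by
      intro s hs
      rcases mem_union.mp hs with hs | hs
      · obtain ⟨z, hz, rfl⟩ := mem_image.mp (hA ▸ hs)
        exact ⟨z, mem_union_left _ hz, rfl⟩
      · obtain ⟨z, hz, rfl⟩ := mem_image.mp (hB ▸ hs)
        exact ⟨z, mem_union_right _ hz, rfl⟩
    obtain ⟨zp, hzp, rfl⟩ := hpre p hp
    obtain ⟨zq, hzq, rfl⟩ := hpre q hq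
    obtain ⟨zr, hzr, rfl⟩ := hpre r hr
    rw [hcross zp zq zr] at hzero
    have hc0 : (zq.1 - zp.1) * (zr.2 - zp.2) - (zq.2 - zp.2) * (zr.1 - zp.1) = 0 := by
      rcases mul_eq_zero.mp hzero with h | h
      · linarith
      · exact h
    exact hgp zp zq zr hzp hzq hzr
      (fun h => hpq (by rw [h])) (fun h => hpr (by rw [h])) (fun h => hqr (by rw [h]))
      (collinear_of_cross zp zq zr hc0)
  obtain ⟨m, k, p₁', hp₁'A, p₂', hp₂'B, hl₁, hl₂, hc1, hc2, hc3, hc4⟩ :=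
    core a b A B hAcard hBcard hAx hBx hgp'
  obtain ⟨p₁, hp₁P, hp₁T⟩ := mem_image.mp (hA ▸ hp₁'A)
  obtain ⟨p₂, hp₂P, hp₂T⟩ := mem_image.mp (hB ▸ hp₂'B)
  refine ⟨p₁, hp₁P, p₂, hp₂P, m * α₀ + β₀, m * β₀ - α₀, k - m * c₀, ?_, ?_, ?_, ?_, ?_, ?_, ?_⟩
  · -- nonzero
    intro h
    rw [Prod.mk.injEq] at h
    obtain ⟨e1, e2⟩ := h
    have hb : β₀ * (m ^ 2 + 1) = 0 := by linear_combination m * e2 + e1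
    have hb0 : β₀ = 0 := by
      rcases mul_eq_zero.mp hb with h | h
      · exact h
      · nlinarith
    have ha0 : α₀ = 0 := by rw [hb0] at e2; linarith
    exact hαβ₀ ⟨ha0, hb0⟩
  · -- line through p₁
    have : (T p₁).2 = m * (T p₁).1 + k := hp₁T ▸ hl₁
    rw [hT] at this
    simp only at this
    linarith
  · -- line through p₂
    have : (T p₂).2 = m * (T p₂).1 + k := hp₂T ▸ hl₂
    rw [hT] at this
    simp only at this
    linarith
  · -- P₁, positive side
    have key : (P₁.filter fun q => (T q).2 < m * (T q).1 + k).card = a := by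
      have h' := hc1
      rw [hA, filter_image, card_image_of_injective _ hTinj] at h'
      exact h'
    rw [show {q ∈ (P₁ : Set (ℝ × ℝ)) |
        0 < (m * α₀ + β₀) * q.1 + (m * β₀ - α₀) * q.2 + (k - m * c₀)}
      = ↑(P₁.filter fun q =>
        0 < (m * α₀ + β₀) * q.1 + (m * β₀ - α₀) * q.2 + (k - m * c₀)) from
      (Finset.coe_filter _ _).symm, Set.ncard_coe_finset]
    rw [filter_congr (fun z _ => show
        (0 < (m * α₀ + β₀) * z.1 + (m * β₀ - α₀) * z.2 + (k - m * c₀))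
          ↔ ((T z).2 < m * (T z).1 + k) by
      rw [hT]; simp only; constructor <;> intro h <;> nlinarith [h])]
    exact key
  · -- P₁, negative side
    have key : (P₁.filter fun q => m * (T q).1 + k < (T q).2).card = a := by
      have h' := hc2
      rw [hA, filter_image, card_image_of_injective _ hTinj] at h'
      exact h'
    rw [show {q ∈ (P₁ : Set (ℝ × ℝ)) |
        (m * α₀ + β₀) * q.1 + (m * β₀ - α₀) * q.2 + (k - m * c₀) < 0}
      = ↑(P₁.filter fun q =>
        (m * α₀ + β₀) * q.1 + (m * β₀ - α₀) * q.2 + (k - m * c₀) < 0) from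
      (Finset.coe_filter _ _).symm, Set.ncard_coe_finset]
    rw [filter_congr (fun z _ => show
        ((m * α₀ + β₀) * z.1 + (m * β₀ - α₀) * z.2 + (k - m * c₀) < 0)
          ↔ (m * (T z).1 + k < (T z).2) by
      rw [hT]; simp only; constructor <;> intro h <;> nlinarith [h])]
    exact key
  · -- P₂, positive side
    have key : (P₂.filter fun q => (T q).2 < m * (T q).1 + k).card = b := by
      have h' := hc3
      rw [hB, filter_image, card_image_of_injective _ hTinj] at h'
      exact h'
    rw [show {q ∈ (P₂ : Set (ℝ × ℝ)) |
        0 < (m * α₀ + β₀) * q.1 + (m * β₀ - α₀) * q.2 + (k - m * c₀)}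
      = ↑(P₂.filter fun q =>
        0 < (m * α₀ + β₀) * q.1 + (m * β₀ - α₀) * q.2 + (k - m * c₀)) from
      (Finset.coe_filter _ _).symm, Set.ncard_coe_finset]
    rw [filter_congr (fun z _ => show
        (0 < (m * α₀ + β₀) * z.1 + (m * β₀ - α₀) * z.2 + (k - m * c₀))
          ↔ ((T z).2 < m * (T z).1 + k) by
      rw [hT]; simp only; constructor <;> intro h <;> nlinarith [h])]
    exact key
  · -- P₂, negative side
    have key : (P₂.filter fun q => m * (T q).1 + k < (T q).2).card = b := by
      have h' := hc4
      rw [hB, filter_image, card_image_of_injective _ hTinj] at h'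
      exact h'
    rw [show {q ∈ (P₂ : Set (ℝ × ℝ)) |
        (m * α₀ + β₀) * q.1 + (m * β₀ - α₀) * q.2 + (k - m * c₀) < 0}
      = ↑(P₂.filter fun q =>
        (m * α₀ + β₀) * q.1 + (m * β₀ - α₀) * q.2 + (k - m * c₀) < 0) from
      (Finset.coe_filter _ _).symm, Set.ncard_coe_finset]
    rw [filter_congr (fun z _ => show
        ((m * α₀ + β₀) * z.1 + (m * β₀ - α₀) * z.2 + (k - m * c₀) < 0)
          ↔ (m * (T z).1 + k < (T z).2) by
      rw [hT]; simp only; constructor <;> intro h <;> nlinarith [h])]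
    exact key
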